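/- After an incremental update on the set E_i(v) of edges incoming to v, for any source s and any edge (a,b): (a,b) ∈ DAG'_R(s) if and only if at least one of the following holds: (i) (a,b) ∈ DAG_R(s) and flag(b,s) ∈ {UN-changed, NUM-changed}; (ii) (a,b) ∈ R_b and flag(b,s) ∈ {NUM-changed, WT-changed}. -/

import Mathlib

open scoped ENNReal

namespace BC

variable {V : Type*}

/-- `p` is a path from `s` to `t` in the weighted digraph with weight function `w`;
an edge is present iff its weight is not `⊤`. -/
def IsPath (w : V → V → ℝ≥0∞) (s t : V) (p : List V) : Prop :=
  p ≠ [] ∧ p.head? = some s ∧ p.getLast? = some t ∧ p.Chain' (fun a b => w a b ≠ ⊤)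

/-- The weight of a path: the sum of the weights of its consecutive edges. -/
noncomputable def pWeight (w : V → V → ℝ≥0∞) (p : List V) : ℝ≥0∞ :=
  ((p.zip p.tail).map fun e => w e.1 e.2).sum

/-- The shortest-path distance `d(s,t)` (equal to `⊤` if no path exists). -/
noncomputable def dist (w : V → V → ℝ≥0∞) (s t : V) : ℝ≥0∞ :=
  ⨅ p ∈ {p | IsPath w s t p}, pWeight w p

/-- `p` is a shortest path from `s` to `t`. -/
def IsShortest (w : V → V → ℝ≥0∞) (s t : V) (p : List V) : Prop :=
  IsPath w s t p ∧ pWeight w p = dist w s t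

/-- `σ_{st}`: the number of shortest paths from `s` to `t`. -/
noncomputable def nsp (w : V → V → ℝ≥0∞) (s t : V) : ℕ :=
  Set.ncard {p | IsShortest w s t p}

/-- `σ_{st}(x)`: the number of shortest paths from `s` to `t` passing through `x`. -/
noncomputable def nspVia (w : V → V → ℝ≥0∞) (s t x : V) : ℕ :=
  Set.ncard {p | IsShortest w s t p ∧ x ∈ p}

/-- The directed edge `(a,b)` lies on the path `p`. -/
def edgeOn (p : List V) (a b : V) : Prop := (a, b) ∈ p.zip p.tail

/-- The shortest-path DAG rooted at `s`: the edges lying on shortest paths from `s`. -/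
def dagSet (w : V → V → ℝ≥0∞) (s : V) : Set (V × V) :=
  {e | w e.1 e.2 ≠ ⊤ ∧ dist w s e.1 ≠ ⊤ ∧ dist w s e.1 + w e.1 e.2 = dist w s e.2}

/-- flag(s,t) = WT-changed : the distance from `s` to `t` decreased. -/
def WTchanged (w w' : V → V → ℝ≥0∞) (s t : V) : Prop := dist w' s t < dist w s t

/-- flag(s,t) = NUM-changed : same distance, strictly more shortest paths. -/
def NUMchanged (w w' : V → V → ℝ≥0∞) (s t : V) : Prop :=
  dist w' s t = dist w s t ∧ nsp w s t < nsp w' s t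

/-- flag(s,t) = UN-changed : same distance, same number of shortest paths. -/
def UNchanged (w w' : V → V → ℝ≥0∞) (s t : V) : Prop :=
  dist w' s t = dist w s t ∧ nsp w' s t = nsp w s t

/-! ### Auxiliary lemmas -/


lemma pWeight_nil (w : V → V → ℝ≥0∞) : pWeight w ([] : List V) = 0 := rfl

lemma pWeight_single (w : V → V → ℝ≥0∞) (x : V) : pWeight w [x] = 0 := rfl

lemma pWeight_cons_cons (w : V → V → ℝ≥0∞) (x y : V) (l : List V) :
    pWeight w (x :: y :: l) = w x y + pWeight w (y :: l) := by
  simp [pWeight]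

lemma pWeight_append (w : V → V → ℝ≥0∞) (c : V) :
    ∀ (p q : List V), pWeight w (p ++ c :: q) = pWeight w (p ++ [c]) + pWeight w (c :: q)
  | [], q => by simp [pWeight_single]
  | [x], q => by simp [pWeight_cons_cons, pWeight_single]
  | x :: y :: p, q => by
    have ih := pWeight_append w c (y :: p) q
    simp only [List.cons_append] at ih ⊢
    rw [pWeight_cons_cons, pWeight_cons_cons, ih, add_assoc]

lemma chain'_iff_pairs (R : V → V → Prop) :
    ∀ (p : List V), p.Chain' R ↔ ∀ e ∈ p.zip p.tail, R e.1 e.2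
  | [] => by simp [List.Chain']
  | [x] => by simp [List.Chain']
  | x :: y :: l => by
    rw [show List.Chain' R (x :: y :: l) ↔ R x y ∧ List.Chain' R (y :: l) from List.isChain_cons_cons]
    simp only [List.tail_cons, List.zip_cons_cons, List.mem_cons]
    rw [chain'_iff_pairs R (y :: l)]
    constructor
    · rintro ⟨h1, h2⟩ e (rfl | he)
      · exact h1
      · exact h2 e he
    · intro h
      exact ⟨h (x, y) (Or.inl rfl), fun e he => h e (Or.inr he)⟩

lemma mem_zip_tail : ∀ {p : List V} {x y : V}, (x, y) ∈ p.zip p.tail →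
    ∃ l₁ l₂, p = l₁ ++ x :: y :: l₂
  | [], x, y => by simp
  | [a], x, y => by simp
  | a :: b :: r, x, y => by
    simp only [List.tail_cons, List.zip_cons_cons, List.mem_cons]
    rintro (h | h)
    · rw [Prod.mk.injEq] at h
      obtain ⟨rfl, rfl⟩ := h
      exact ⟨[], r, rfl⟩
    · obtain ⟨l₁, l₂, hb⟩ := mem_zip_tail h
      exact ⟨a :: l₁, l₂, by rw [List.cons_append, ← hb]⟩

lemma list_sum_ne_top : ∀ {l : List ℝ≥0∞}, (∀ x ∈ l, x ≠ ⊤) → l.sum ≠ ⊤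
  | [] => by simp
  | a :: l => by
    intro h
    rw [List.sum_cons]
    exact ENNReal.add_ne_top.2 ⟨h a (by simp), list_sum_ne_top fun x hx => h x (by simp [hx])⟩

lemma list_sum_eq_top {l : List ℝ≥0∞} {x : ℝ≥0∞} (hx : x ∈ l) (hxt : x = ⊤) : l.sum = ⊤ := by
  have := List.single_le_sum (fun y _ => zero_le (a := y)) x hx
  rw [hxt] at this
  exact top_le_iff.mp this

lemma head?_append_cons (l m : List V) (a : V) : (l ++ a :: m).head? = (l ++ [a]).head? := by
  cases l <;> simp

lemma pWeight_concat (w : V → V → ℝ≥0∞) {q : List V} (hq : q ≠ []) (x : V) :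
    pWeight w (q ++ [x]) = pWeight w q + w (q.getLast hq) x := by
  conv_lhs => rw [← List.dropLast_append_getLast hq]
  rw [List.append_assoc]
  simp only [List.singleton_append]
  rw [pWeight_append w (q.getLast hq) q.dropLast [x]]
  rw [List.dropLast_append_getLast hq]
  rw [pWeight_cons_cons, pWeight_single, add_zero]

lemma pWeight_reverse (w : V → V → ℝ≥0∞) :
    ∀ (p : List V), pWeight w p.reverse = pWeight (fun a b => w b a) p
  | [] => rfl
  | [x] => rfl
  | x :: y :: l => by
    have ih := pWeight_reverse w (y :: l)
    rw [pWeight_cons_cons, ← ih]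
    have h1 : (x :: y :: l).reverse = (y :: l).reverse ++ [x] := by simp
    rw [h1, pWeight_concat w (by simp) x]
    have h2 : (y :: l).reverse.getLast (by simp) = y := by
      rw [List.getLast_reverse]
      rfl
    rw [h2, add_comm]

lemma isPath_reverse (w : V → V → ℝ≥0∞) (s t : V) (p : List V) :
    IsPath (fun a b => w b a) s t p ↔ IsPath w t s p.reverse := by
  unfold IsPath List.Chain'
  rw [List.head?_reverse, List.getLast?_reverse, List.isChain_reverse]
  constructor
  · rintro ⟨h1, h2, h3, h4⟩
    exact ⟨by simpa using h1, h3, h2, h4⟩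
  · rintro ⟨h1, h2, h3, h4⟩
    exact ⟨by simpa using h1, h3, h2, h4⟩

lemma dist_le_pWeight {w : V → V → ℝ≥0∞} {s t : V} {p : List V} (hp : IsPath w s t p) :
    dist w s t ≤ pWeight w p := iInf₂_le p hp

lemma exists_path_lt {w : V → V → ℝ≥0∞} {s t : V} {C : ℝ≥0∞} (h : dist w s t < C) :
    ∃ p, IsPath w s t p ∧ pWeight w p < C := by
  by_contra hc
  push_neg at hc
  exact absurd h (not_lt.2 (le_iInf₂ hc))

lemma dist_flip (w : V → V → ℝ≥0∞) (s t : V) :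
    dist (fun a b => w b a) s t = dist w t s := by
  apply le_antisymm
  · refine le_iInf₂ fun p hp => ?_
    have h1 : IsPath (fun a b => w b a) s t p.reverse := by
      rw [isPath_reverse, List.reverse_reverse]; exact hp
    calc dist (fun a b => w b a) s t ≤ pWeight (fun a b => w b a) p.reverse :=
          dist_le_pWeight h1
      _ = pWeight w p.reverse.reverse := by rw [← pWeight_reverse]
      _ = pWeight w p := by rw [List.reverse_reverse]
  · refine le_iInf₂ fun p hp => ?_
    have hp' : IsPath (fun a b => w b a) s t p := hp
    rw [isPath_reverse] at hp'
    calc dist w t s ≤ pWeight w p.reverse := dist_le_pWeight hp'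
      _ = pWeight (fun a b => w b a) p := pWeight_reverse w p

lemma dist_self (w : V → V → ℝ≥0∞) (t : V) : dist w t t = 0 := by
  refine le_antisymm ?_ zero_le
  have h : IsPath w t t [t] := ⟨by simp, rfl, rfl, by simp [List.Chain']⟩
  have := dist_le_pWeight h
  simpa [pWeight_single] using this

lemma pairs_ne_top {w : V → V → ℝ≥0∞} {p : List V} (h : pWeight w p ≠ ⊤) :
    ∀ e ∈ p.zip p.tail, w e.1 e.2 ≠ ⊤ :=
  fun e he ht => h (list_sum_eq_top (List.mem_map_of_mem he) ht)

lemma pWeight_ne_top {w : V → V → ℝ≥0∞} {s t : V} {p : List V} (hp : IsPath w s t p) :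
    pWeight w p ≠ ⊤ :=
  list_sum_ne_top (by
    intro x hx
    obtain ⟨e, he, rfl⟩ := List.mem_map.mp hx
    exact (chain'_iff_pairs _ p).mp hp.2.2.2 e he)

lemma dist_le_pWeight_any {w w₂ : V → V → ℝ≥0∞} {s t : V} {p : List V}
    (hp : IsPath w₂ s t p) : dist w s t ≤ pWeight w p := by
  by_cases h : ∀ e ∈ p.zip p.tail, w e.1 e.2 ≠ ⊤
  · exact dist_le_pWeight ⟨hp.1, hp.2.1, hp.2.2.1, (chain'_iff_pairs _ p).mpr h⟩
  · push_neg at h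
    obtain ⟨e, he, het⟩ := h
    have : pWeight w p = ⊤ := list_sum_eq_top (List.mem_map_of_mem he) het
    simp [this]

lemma path_cons {w : V → V → ℝ≥0∞} {a s : V} {p : List V} (hp : IsPath w a s p) (b : V)
    (hba : w b a ≠ ⊤) :
    IsPath w b s (b :: p) ∧ pWeight w (b :: p) = w b a + pWeight w p := by
  obtain ⟨hne, hh, hl, hc⟩ := hp
  obtain ⟨q, rfl⟩ := List.head?_eq_some_iff.mp hh
  refine ⟨⟨by simp, rfl, by rw [List.getLast?_cons_cons]; exact hl, ?_⟩, ?_⟩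
  · exact List.isChain_cons_cons.mpr ⟨hba, hc⟩
  · rw [pWeight_cons_cons]

lemma path_append {w : V → V → ℝ≥0∞} {x y z : V} {p q : List V}
    (hp : IsPath w x y p) (hq : IsPath w y z q) :
    IsPath w x z (p ++ q.tail) ∧ pWeight w (p ++ q.tail) = pWeight w p + pWeight w q := by
  obtain ⟨hpne, hph, hpl, hpc⟩ := hp
  obtain ⟨hqne, hqh, hql, hqc⟩ := hq
  obtain ⟨q', rfl⟩ := List.head?_eq_some_iff.mp hqh
  simp only [List.tail_cons]
  obtain ⟨l, rfl⟩ : ∃ l, p = l ++ [y] := by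
    refine ⟨p.dropLast, ?_⟩
    have h1 := List.dropLast_append_getLast hpne
    have h2 : p.getLast hpne = y := by
      have h3 : p.getLast? = some (p.getLast hpne) := List.getLast?_eq_getLast hpne
      rw [h3] at hpl
      exact Option.some_inj.mp hpl
    rw [h2] at h1
    exact h1.symm
  cases q' with
  | nil =>
    have hz : y = z := by simpa using hql
    subst hz
    simp only [List.append_nil]
    exact ⟨⟨hpne, hph, hpl, hpc⟩, by rw [pWeight_single, add_zero]⟩
  | cons c r =>
    obtain ⟨hc1, hc2, hc3⟩ := List.isChain_append.mp hpc
    constructor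
    · refine ⟨by simp, ?_, ?_, ?_⟩
      · rw [List.append_assoc]
        rw [show [y] ++ c :: r = y :: c :: r from rfl]
        rw [head?_append_cons l (c :: r) y]
        exact hph
      · rw [List.append_assoc]
        rw [show [y] ++ c :: r = y :: c :: r from rfl]
        rw [List.getLast?_append]
        have : (y :: c :: r).getLast? = some z := by
          rw [List.getLast?_cons_cons]
          rw [List.getLast?_cons_cons] at hql
          exact hql
        rw [this]
        rfl
      · rw [List.append_assoc]
        rw [show [y] ++ c :: r = y :: c :: r from rfl]
        refine List.isChain_append.mpr ⟨hc1, hqc, ?_⟩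
        intro a ha b hb
        simp only [List.head?_cons, Option.mem_def, Option.some.injEq] at hb
        subst hb
        exact hc3 a ha y (by simp)
    · rw [List.append_assoc]
      rw [show [y] ++ c :: r = y :: c :: r from rfl]
      exact pWeight_append w y l (c :: r)

lemma path_split {w : V → V → ℝ≥0∞} {st z x y : V} {l₁ l₂ : List V}
    (hp : IsPath w st z (l₁ ++ x :: y :: l₂)) :
    IsPath w st y (l₁ ++ [x, y]) ∧ IsPath w y z (y :: l₂) ∧
      pWeight w (l₁ ++ x :: y :: l₂) = pWeight w (l₁ ++ [x, y]) + pWeight w (y :: l₂) := by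
  obtain ⟨hne, hh, hl, hc⟩ := hp
  have hassoc : l₁ ++ x :: y :: l₂ = (l₁ ++ [x]) ++ y :: l₂ := by simp
  have hassoc2 : l₁ ++ [x, y] = (l₁ ++ [x]) ++ [y] := by simp
  rw [hassoc] at hc
  obtain ⟨hc1, hc2, hc3⟩ := List.isChain_append.mp hc
  refine ⟨⟨by simp, ?_, ?_, ?_⟩, ⟨by simp, rfl, ?_, hc2⟩, ?_⟩
  · rw [show l₁ ++ [x, y] = l₁ ++ x :: [y] from rfl, head?_append_cons]
    rw [show l₁ ++ x :: y :: l₂ = l₁ ++ x :: (y :: l₂) from rfl, head?_append_cons] at hh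
    exact hh
  · rw [hassoc2, List.getLast?_append]
    rfl
  · rw [hassoc2]
    refine List.isChain_append.mpr ⟨hc1, List.isChain_singleton y, ?_⟩
    intro a ha b hb
    simp only [List.head?_cons, Option.mem_def, Option.some.injEq] at hb
    subst hb
    exact hc3 a ha y (by simp)
  · rw [List.getLast?_append] at hl
    rw [List.getLast?_cons_cons] at hl
    cases hcy : (y :: l₂).getLast? with
    | none => simp at hcy
    | some q =>
      rw [hcy] at hl
      simpa using hl
  · have := pWeight_append w y (l₁ ++ [x]) l₂
    rw [← hassoc] at this
    rw [← hassoc2] at this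
    exact this

lemma finite_paths_le [Fintype V] {w : V → V → ℝ≥0∞} (hpos : ∀ a b, 0 < w a b)
    (s t : V) {C : ℝ≥0∞} (hC : C ≠ ⊤) :
    {p : List V | IsPath w s t p ∧ pWeight w p ≤ C}.Finite := by
  have hne : Nonempty (V × V) := ⟨(s, t)⟩
  obtain ⟨e₀, he₀⟩ := Finite.exists_min (fun e : V × V => w e.1 e.2)
  set ε := w e₀.1 e₀.2 with hεdef
  have hε0 : ε ≠ 0 := (hpos _ _).ne'
  obtain ⟨N, hN⟩ := ENNReal.exists_nat_gt (show C / ε ≠ ⊤ from (ENNReal.div_lt_top hC hε0).ne)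
  apply (List.finite_length_le V (N + 1)).subset
  rintro p ⟨hp, hple⟩
  simp only [Set.mem_setOf_eq]
  have hsum : ((p.zip p.tail).length : ℝ≥0∞) * ε ≤ C := by
    calc ((p.zip p.tail).length : ℝ≥0∞) * ε
        = ((p.zip p.tail).map (fun _ => ε)).sum := by
          simp [List.sum_replicate, nsmul_eq_mul]
      _ ≤ ((p.zip p.tail).map (fun e => w e.1 e.2)).sum :=
          List.sum_le_sum (fun e _ => he₀ e)
      _ ≤ C := hple
  have hdiv : ((p.zip p.tail).length : ℝ≥0∞) ≤ C / ε :=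
    (ENNReal.le_div_iff_mul_le (Or.inl hε0) (Or.inr hC)).mpr hsum
  have hlt : ((p.zip p.tail).length : ℝ≥0∞) < N := lt_of_le_of_lt hdiv hN
  have hlen : (p.zip p.tail).length < N := by exact_mod_cast hlt
  have hlen2 : p.length ≤ (p.zip p.tail).length + 1 := by
    rw [List.length_zip, List.length_tail]
    cases p with
    | nil => simp
    | cons a q =>
      simp only [List.tail_cons, List.length_zip, List.length_cons, min_def]
      split <;> omega
  omega

lemma exists_isShortest [Fintype V] {w : V → V → ℝ≥0∞} (hpos : ∀ a b, 0 < w a b)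
    {s t : V} (h : dist w s t ≠ ⊤) : ∃ p, IsPath w s t p ∧ pWeight w p = dist w s t := by
  obtain ⟨p₀, hp₀, hw₀⟩ := exists_path_lt (lt_top_iff_ne_top.2 h)
  have hT : {p : List V | IsPath w s t p ∧ pWeight w p ≤ pWeight w p₀}.Finite :=
    finite_paths_le hpos s t hw₀.ne
  obtain ⟨m, ⟨hm, hmle⟩, hmin⟩ :=
    Set.exists_min_image _ (pWeight w) hT ⟨p₀, hp₀, le_rfl⟩
  refine ⟨m, hm, le_antisymm ?_ (dist_le_pWeight hm)⟩
  refine le_iInf₂ fun q hq => ?_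
  by_cases hqle : pWeight w q ≤ pWeight w p₀
  · exact hmin q ⟨hq, hqle⟩
  · exact le_trans (le_trans hmle (le_of_not_ge hqle)) le_rfl

lemma finite_shortest [Fintype V] {w : V → V → ℝ≥0∞} (hpos : ∀ a b, 0 < w a b) (s t : V) :
    {p : List V | IsShortest w s t p}.Finite := by
  by_cases h : dist w s t = ⊤
  · convert Set.finite_empty
    ext p
    simp only [Set.mem_setOf_eq, Set.mem_empty_iff_false, iff_false]
    rintro ⟨hp, hw⟩
    exact pWeight_ne_top hp (by rw [hw, h])
  · exact (finite_paths_le hpos s t h).subset (by rintro p ⟨hp, hw⟩; exact ⟨hp, hw.le⟩)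

lemma isPath_mono {w w' : V → V → ℝ≥0∞} (hle : ∀ a b, w' a b ≤ w a b) {s t : V} {p : List V}
    (hp : IsPath w s t p) : IsPath w' s t p :=
  ⟨hp.1, hp.2.1, hp.2.2.1,
    hp.2.2.2.imp (by intro a b h ht; exact h (top_le_iff.mp (ht ▸ hle a b)))⟩

lemma pWeight_mono {w w' : V → V → ℝ≥0∞} (hle : ∀ a b, w' a b ≤ w a b) (p : List V) :
    pWeight w' p ≤ pWeight w p :=
  List.sum_le_sum fun e _ => hle e.1 e.2

lemma dist_mono {w w' : V → V → ℝ≥0∞} (hle : ∀ a b, w' a b ≤ w a b) (s t : V) :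
    dist w' s t ≤ dist w s t :=
  le_iInf₂ fun p hp =>
    (dist_le_pWeight (isPath_mono hle hp)).trans (pWeight_mono hle p)

lemma shortest_mono {w w' : V → V → ℝ≥0∞} (hle : ∀ a b, w' a b ≤ w a b) {s t : V}
    (hd : dist w' s t = dist w s t) {p : List V} (hp : IsShortest w s t p) :
    IsShortest w' s t p := by
  refine ⟨isPath_mono hle hp.1, le_antisymm ?_ (dist_le_pWeight (isPath_mono hle hp.1))⟩
  rw [hd, ← hp.2]
  exact pWeight_mono hle p

lemma dist_le_edge [Fintype V] {w : V → V → ℝ≥0∞} (hpos : ∀ a b, 0 < w a b) (x y z : V) :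
    dist w x z ≤ w x y + dist w y z := by
  by_cases h1 : w x y = ⊤
  · simp [h1]
  by_cases h2 : dist w y z = ⊤
  · simp [h2]
  obtain ⟨p, hp, hpw⟩ := exists_isShortest hpos h2
  obtain ⟨hpp, hpw2⟩ := path_cons hp x h1
  calc dist w x z ≤ pWeight w (x :: p) := dist_le_pWeight hpp
    _ = w x y + dist w y z := by rw [hpw2, hpw]

lemma dist_triangle [Fintype V] {w : V → V → ℝ≥0∞} (hpos : ∀ a b, 0 < w a b) (x y z : V) :
    dist w x z ≤ dist w x y + dist w y z := by
  by_cases h1 : dist w x y = ⊤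
  · simp [h1]
  by_cases h2 : dist w y z = ⊤
  · simp [h2]
  obtain ⟨p, hp, hpw⟩ := exists_isShortest hpos h1
  obtain ⟨q, hq, hqw⟩ := exists_isShortest hpos h2
  obtain ⟨hcat, hwcat⟩ := path_append hp hq
  calc dist w x z ≤ pWeight w (p ++ q.tail) := dist_le_pWeight hcat
    _ = _ := by rw [hwcat, hpw, hqw]


/-- Lemma 5: after an incremental update on the edges `E_i(v)` incoming
to `v`, for any source `s` and edge `(a,b)`: `(a,b) ∈ DAG'_R(s)` (the shortest-path DAG
rooted at `s` in the reverse graph of `G'`) iff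
(i) `(a,b) ∈ DAG_R(s)` and flag(b,s) ∈ {UN-changed, NUM-changed}; or
(ii) `(a,b) ∈ R_b` (i.e. `(b,a) ∈ DAG'(b)` and `w'(b,a) + d'(a,v) = d'(b,v)`)
and flag(b,s) ∈ {NUM-changed, WT-changed}. -/
theorem update_reverse_dag_correct [Fintype V]
(w w' : V → V → ℝ≥0∞) (v : V) (U : Finset V)
    (hpos : ∀ a b, 0 < w a b) (hpos' : ∀ a b, 0 < w' a b)
    (hdec : ∀ u ∈ U, w' u v < w u v)
    (hsame : ∀ a b : V, ¬(b = v ∧ a ∈ U) → w' a b = w a b)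
    (s a b : V) :
    (a, b) ∈ dagSet (fun x y => w' y x) s ↔
      ((a, b) ∈ dagSet (fun x y => w y x) s ∧
        (UNchanged w w' b s ∨ NUMchanged w w' b s)) ∨
      (((b, a) ∈ dagSet w' b ∧ w' b a + dist w' a v = dist w' b v) ∧
        (NUMchanged w w' b s ∨ WTchanged w w' b s)) := by
  have hle : ∀ x y, w' x y ≤ w x y := by
    intro x y
    by_cases h : y = v ∧ x ∈ U
    · obtain ⟨rfl, hx⟩ := h
      exact (hdec x hx).le
    · exact (hsame x y h).le
  have hUNiff : (UNchanged w w' b s ∨ NUMchanged w w' b s) ↔ dist w' b s = dist w b s := by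
    constructor
    · rintro (h | h) <;> exact h.1
    · intro hd
      have hnsp : nsp w b s ≤ nsp w' b s :=
        Set.ncard_le_ncard (fun p hp => shortest_mono hle hd hp) (finite_shortest hpos' b s)
      rcases lt_or_eq_of_le hnsp with h | h
      · exact Or.inr ⟨hd, h⟩
      · exact Or.inl ⟨hd, h.symm⟩
  simp only [dagSet, Set.mem_setOf_eq, dist_flip, dist_self, zero_add, ne_eq,
    ENNReal.zero_ne_top, not_false_eq_true, true_and]
  constructor
  · rintro ⟨hbaT, haT, heq⟩
    have hdbs : dist w' b s ≠ ⊤ := by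
      rw [← heq]; exact ENNReal.add_ne_top.2 ⟨haT, hbaT⟩
    have hba_eq : w' b a = dist w' b a := by
      refine le_antisymm ?_ ?_
      · by_contra hlt0
        push_neg at hlt0
        have h1 : dist w' b s ≤ dist w' b a + dist w' a s := dist_triangle hpos' b a s
        have h2 : dist w' b a + dist w' a s < w' b a + dist w' a s :=
          ENNReal.add_lt_add_right haT hlt0
        rw [add_comm (w' b a)] at h2
        rw [heq] at h2
        exact absurd (lt_of_le_of_lt h1 h2) (lt_irrefl _)
      · have := dist_le_edge hpos' b a a
        rwa [dist_self, add_zero] at this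
    obtain ⟨p₀, hp₀path, hp₀w⟩ := exists_isShortest hpos' haT
    have hp₀head : p₀.head? = some a := hp₀path.2.1
    obtain ⟨prest, rfl⟩ := List.head?_eq_some_iff.mp hp₀head
    obtain ⟨hPpath, hPw⟩ := path_cons hp₀path b hbaT
    have hPwd : pWeight w' (b :: a :: prest) = dist w' b s := by
      rw [hPw, hp₀w, ← heq, add_comm]
    -- core: a strictly-improved shortest path yields condition R2
    have hcore : pWeight w' (b :: a :: prest) < pWeight w (b :: a :: prest) →
        w' b a + dist w' a v = dist w' b v := by
      intro hgt
      obtain ⟨e, he, helt⟩ :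
          ∃ e ∈ (b :: a :: prest).zip (b :: a :: prest).tail, w' e.1 e.2 < w e.1 e.2 := by
        by_contra hc
        push_neg at hc
        exact absurd (List.sum_le_sum (fun e he' => hc e he')) (not_le.2 hgt)
      rcases e with ⟨u, c⟩
      have hcv : c = v := by
        by_contra hne
        rw [hsame u c (fun hh => hne hh.1)] at helt
        exact lt_irrefl _ helt
      rw [hcv] at he
      obtain ⟨l₁, l₂, hsplit⟩ := mem_zip_tail he
      rw [hsplit] at hPpath hPwd
      obtain ⟨hQ, hR, hPW⟩ := path_split hPpath
      have hQd : pWeight w' (l₁ ++ [u, v]) = dist w' b v := by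
        refine le_antisymm ?_ (dist_le_pWeight hQ)
        have hRt : pWeight w' (v :: l₂) ≠ ⊤ := pWeight_ne_top hR
        rw [← ENNReal.add_le_add_iff_right hRt]
        calc pWeight w' (l₁ ++ [u, v]) + pWeight w' (v :: l₂)
            = dist w' b s := by rw [← hPW, hPwd]
          _ ≤ dist w' b v + dist w' v s := dist_triangle hpos' b v s
          _ ≤ dist w' b v + pWeight w' (v :: l₂) :=
              add_le_add_right (dist_le_pWeight hR) _
      obtain ⟨q', hq'⟩ := List.head?_eq_some_iff.mp hQ.2.1
      rw [hq'] at hQ hQd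
      have hq'p : q' ++ l₂ = a :: prest := by
        have h5 : (b :: q') ++ l₂ = b :: a :: prest := by
          rw [← hq', List.append_assoc]
          simp only [List.cons_append, List.nil_append]
          exact hsplit.symm
        simpa using h5
      have hq'ne : q' ≠ [] := by
        intro hnil
        rw [hnil] at hq'
        have := congrArg List.length hq'
        simp at this
      have hq'head : q'.head? = some a := by
        have := List.head?_append_of_ne_nil q' (l₂ := l₂) hq'ne
        rw [hq'p] at this
        simpa using this.symm
      obtain ⟨q'', rfl⟩ := List.head?_eq_some_iff.mp hq'head
      have hQtail : IsPath w' a v (a :: q'') := by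
        refine ⟨by simp, rfl, ?_, hQ.2.2.2.tail⟩
        have := hQ.2.2.1
        rwa [List.getLast?_cons_cons] at this
      refine le_antisymm ?_ (dist_le_edge hpos' b a v)
      rw [← hQd, pWeight_cons_cons]
      exact add_le_add_right (dist_le_pWeight hQtail) _
    by_cases hdeq : dist w' b s = dist w b s
    · by_cases hR1 : (w b a ≠ ⊤ ∧ dist w a s ≠ ⊤ ∧ dist w a s + w b a = dist w b s)
      · exact Or.inl ⟨hR1, hUNiff.mpr hdeq⟩
      · have h1 : dist w b s < dist w a s + w b a := by
          rcases eq_or_lt_of_le (by rw [add_comm]; exact dist_le_edge hpos b a s :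
              dist w b s ≤ dist w a s + w b a) with hE | hE
          · exfalso
            apply hR1
            have hfin : dist w a s + w b a ≠ ⊤ := by rw [← hE, ← hdeq]; exact hdbs
            exact ⟨(ENNReal.add_ne_top.1 hfin).2, (ENNReal.add_ne_top.1 hfin).1, hE.symm⟩
          · exact hE
        have hPgt : pWeight w' (b :: a :: prest) < pWeight w (b :: a :: prest) := by
          calc pWeight w' (b :: a :: prest) = dist w' b s := hPwd
            _ = dist w b s := hdeq
            _ < dist w a s + w b a := h1
            _ = w b a + dist w a s := add_comm _ _
            _ ≤ w b a + pWeight w (a :: prest) :=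
                add_le_add_right (dist_le_pWeight_any hp₀path) _
            _ = pWeight w (b :: a :: prest) := (pWeight_cons_cons w b a prest).symm
        have hNUM : NUMchanged w w' b s := by
          refine ⟨hdeq, ?_⟩
          apply Set.ncard_lt_ncard ?_ (finite_shortest hpos' b s)
          constructor
          · exact fun p hp => shortest_mono hle hdeq hp
          · intro hsub
            have hPs : IsShortest w' b s (b :: a :: prest) := ⟨hPpath, hPwd⟩
            have hOld := hsub hPs
            rw [hOld.2, ← hdeq, ← hPwd] at hPgt
            exact lt_irrefl _ hPgt
        exact Or.inr ⟨⟨⟨hbaT, hba_eq⟩, hcore hPgt⟩, Or.inl hNUM⟩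
    · have hWT : WTchanged w w' b s := lt_of_le_of_ne (dist_mono hle b s) hdeq
      have hPgt : pWeight w' (b :: a :: prest) < pWeight w (b :: a :: prest) := by
        calc pWeight w' (b :: a :: prest) = dist w' b s := hPwd
          _ < dist w b s := hWT
          _ ≤ pWeight w (b :: a :: prest) := dist_le_pWeight_any hPpath
      exact Or.inr ⟨⟨⟨hbaT, hba_eq⟩, hcore hPgt⟩, Or.inr hWT⟩
  · rintro (⟨⟨hwba, hdas, heq⟩, hflag⟩ | ⟨⟨⟨hbaT, hba_eq⟩, hbv⟩, hflag⟩)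
    · have hdeq : dist w' b s = dist w b s := hUNiff.mp hflag
      have h1 : w' b a ≠ ⊤ := fun h => hwba (top_le_iff.mp (h ▸ hle b a))
      have h2 : dist w' a s ≠ ⊤ := fun h => hdas (top_le_iff.mp (h ▸ dist_mono hle a s))
      refine ⟨h1, h2, le_antisymm ?_ ?_⟩
      · calc dist w' a s + w' b a ≤ dist w a s + w b a :=
            add_le_add (dist_mono hle a s) (hle b a)
          _ = dist w b s := heq
          _ = dist w' b s := hdeq.symm
      · rw [add_comm]
        exact dist_le_edge hpos' b a s
    · have hPex : ∃ P, IsShortest w' b s P ∧ pWeight w' P < pWeight w P := by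
        rcases hflag with ⟨hdeq, hlt⟩ | hWT
        · by_contra hc
          push_neg at hc
          have hsub : {p : List V | IsShortest w' b s p} ⊆ {p | IsShortest w b s p} := by
            intro p hp
            have hge := hc p hp
            have heqp : pWeight w p = pWeight w' p :=
              le_antisymm hge (pWeight_mono hle p)
            have hnt : pWeight w p ≠ ⊤ := by
              rw [heqp]; exact pWeight_ne_top hp.1
            have hpath : IsPath w b s p :=
              ⟨hp.1.1, hp.1.2.1, hp.1.2.2.1, (chain'_iff_pairs _ p).mpr (pairs_ne_top hnt)⟩
            exact ⟨hpath, by rw [heqp, hp.2, hdeq]⟩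
          have hcard := Set.ncard_le_ncard hsub (finite_shortest hpos b s)
          exact absurd hlt (not_lt.2 hcard)
        · have hdne : dist w' b s ≠ ⊤ := hWT.ne_top
          obtain ⟨P, hP, hPw⟩ := exists_isShortest hpos' hdne
          refine ⟨P, ⟨hP, hPw⟩, ?_⟩
          calc pWeight w' P = dist w' b s := hPw
            _ < dist w b s := hWT
            _ ≤ pWeight w P := dist_le_pWeight_any hP
      obtain ⟨P, hPs, hPgt⟩ := hPex
      obtain ⟨e, he, helt⟩ : ∃ e ∈ P.zip P.tail, w' e.1 e.2 < w e.1 e.2 := by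
        by_contra hc
        push_neg at hc
        exact absurd (List.sum_le_sum (fun e he' => hc e he')) (not_le.2 hPgt)
      rcases e with ⟨u, c⟩
      have hcv : c = v := by
        by_contra hne
        rw [hsame u c (fun hh => hne hh.1)] at helt
        exact lt_irrefl _ helt
      rw [hcv] at he
      obtain ⟨l₁, l₂, hsplit⟩ := mem_zip_tail he
      rw [hsplit] at hPs
      obtain ⟨hQ, hR, hPW⟩ := path_split hPs.1
      have hkey : dist w' b s = dist w' b v + dist w' v s := by
        refine le_antisymm (dist_triangle hpos' b v s) ?_
        calc dist w' b v + dist w' v s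
            ≤ pWeight w' (l₁ ++ [u, v]) + pWeight w' (v :: l₂) :=
              add_le_add (dist_le_pWeight hQ) (dist_le_pWeight hR)
          _ = dist w' b s := by rw [← hPW]; exact hPs.2
      have hdne : dist w' b s ≠ ⊤ := by
        rw [← hPs.2]; exact pWeight_ne_top hPs.1
      have hfinal : w' b a + dist w' a s = dist w' b s := by
        refine le_antisymm ?_ (dist_le_edge hpos' b a s)
        calc w' b a + dist w' a s
            ≤ w' b a + (dist w' a v + dist w' v s) :=
              add_le_add_right (dist_triangle hpos' a v s) _
          _ = (w' b a + dist w' a v) + dist w' v s := (add_assoc _ _ _).symm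
          _ = dist w' b v + dist w' v s := by rw [hbv]
          _ = dist w' b s := hkey.symm
      have h2 : dist w' a s ≠ ⊤ := by
        intro h
        rw [h, add_top] at hfinal
        exact hdne hfinal.symm
      exact ⟨hbaT, h2, by rw [add_comm]; exact hfinal⟩

end BC
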